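/- Under the hypotheses of the RLC iteration with noiseless gradients and constant step size 0 < α ≤ min{1/(β+λ), 1/γ}, the averaged iterate x̄^K = (1/K) Σ_{k=1}^K x^{k+1} satisfies the O(1/K) duality-gap bound ℓ(x̄^K, u*) − ℓ(x*, u*) ≤ V(x^1, u^1)/(αK). -/

import Mathlib

open scoped RealInnerProductSpace
open Finset

noncomputable section RLCsetup

/-- Node variables: one `ℝⁿ` vector per node, with the Euclidean (ℓ₂) product
structure. -/
abbrev NodeVec (V n : ℕ) := PiLp 2 fun _ : Fin V => EuclideanSpace ℝ (Fin n)

/-- Edge variables: one `ℝⁿ` vector per edge. -/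
abbrev EdgeVec (m n : ℕ) := PiLp 2 fun _ : Fin m => EuclideanSpace ℝ (Fin n)

/-- Entries of the signed incidence matrix of the oriented graph. -/
def inc {V m : ℕ} (head tail : Fin m → Fin V) (i : Fin V) (e : Fin m) : ℝ :=
  if i = head e then 1 else if i = tail e then -1 else 0

/-- `E_l u = (E diag(√l) ⊗ Iₙ) u`. -/
def Elmap {V m n : ℕ} (head tail : Fin m → Fin V) (l : Fin m → ℝ)
    (u : EdgeVec m n) : NodeVec V n :=
  WithLp.toLp 2 <| fun i => ∑ e, (inc head tail i e * Real.sqrt (l e)) • u e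

/-- `E_lᵀ x = (diag(√l) Eᵀ ⊗ Iₙ) x`. -/
def EltMap {V m n : ℕ} (head tail : Fin m → Fin V) (l : Fin m → ℝ)
    (x : NodeVec V n) : EdgeVec m n :=
  WithLp.toLp 2 <| fun e => Real.sqrt (l e) • ∑ i, inc head tail i e • x i

/-- `L_r x = (E diag(r) Eᵀ ⊗ Iₙ) x`. -/
def LrMap {V m n : ℕ} (head tail : Fin m → Fin V) (r : Fin m → ℝ)
    (x : NodeVec V n) : NodeVec V n :=
  WithLp.toLp 2 <| fun i => ∑ e, (inc head tail i e * r e) • ∑ j, inc head tail j e • x j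

/-- Bregman divergence on node variables. -/
def bregman {V n : ℕ} (ψ : NodeVec V n → ℝ) (ψ' : NodeVec V n → NodeVec V n)
    (x' x : NodeVec V n) : ℝ :=
  ψ x' - ψ x - ⟪ψ' x, x' - x⟫

end RLCsetup
noncomputable section MyHelpers

open Set Filter Topology

variable {E : Type*} [NormedAddCommGroup E] [InnerProductSpace ℝ E] [CompleteSpace E]

theorem myHasGradientAt_inner (w x : E) : HasGradientAt (fun y => ⟪w, y⟫) w x := by
  rw [hasGradientAt_iff_hasFDerivAt]
  have heq : (fun y : E => ⟪w, y⟫) = ⇑(InnerProductSpace.toDual ℝ E w) := by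
    ext y; simp [InnerProductSpace.toDual_apply_apply]
  rw [heq]
  exact (InnerProductSpace.toDual ℝ E w).hasFDerivAt

theorem myHasGradientAt_add {f g : E → ℝ} {a b x : E} (hf : HasGradientAt f a x)
    (hg : HasGradientAt g b x) : HasGradientAt (fun y => f y + g y) (a + b) x := by
  rw [hasGradientAt_iff_hasFDerivAt] at *
  have h := hf.add hg
  rw [map_add]; exact h

theorem myHasGradientAt_sub {f g : E → ℝ} {a b x : E} (hf : HasGradientAt f a x)
    (hg : HasGradientAt g b x) : HasGradientAt (fun y => f y - g y) (a - b) x := by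
  rw [hasGradientAt_iff_hasFDerivAt] at *
  have h := hf.sub hg
  rw [map_sub]; exact h

theorem myHasGradientAt_smul {f : E → ℝ} {a x : E} (c : ℝ) (hf : HasGradientAt f a x) :
    HasGradientAt (fun y => c * f y) (c • a) x := by
  rw [hasGradientAt_iff_hasFDerivAt] at *
  simpa [map_smul] using hf.const_mul c

theorem myHasGradientAt_half_sq (x : E) : HasGradientAt (fun y => ‖y‖ ^ 2 / 2) x x := by
  have h : HasGradientAt (fun y : E => ‖y‖ ^ 2) ((2:ℝ) • x) x := by
    rw [hasGradientAt_iff_hasFDerivAt]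
    have := (hasStrictFDerivAt_norm_sq x).hasFDerivAt
    convert this using 1
    ext y
    simp [InnerProductSpace.toDual_apply_apply, real_inner_smul_left, two_smul]
    ext y
    simp [InnerProductSpace.toDual_apply_apply, real_inner_smul_left, two_smul]
  have h2 := myHasGradientAt_smul (2:ℝ)⁻¹ h
  simp only [smul_smul] at h2
  norm_num at h2
  convert h2 using 2 with y
  · ring

theorem myDirDeriv {h : E → ℝ} {h' p : E} (hg : HasGradientAt h h' p) (v : E) :
    HasDerivAt (fun t : ℝ => h (p + t • v)) ⟪h', v⟫ 0 := by
  have hc : HasDerivAt (fun t : ℝ => p + t • v) v 0 := by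
    simpa using ((hasDerivAt_id (0 : ℝ)).smul_const v).const_add p
  have hg' : HasFDerivAt h ((InnerProductSpace.toDual ℝ E) h') (p + (0:ℝ) • v) := by
    simpa using hg.hasFDerivAt
  have := hg'.comp_hasDerivAt 0 hc
  simpa [InnerProductSpace.toDual_apply_apply, Function.comp_def] using this

theorem inner_le_of_slope {h : E → ℝ} {h' p : E} (hg : HasGradientAt h h' p) (v : E) {c : ℝ}
    (hc : ∀ t ∈ Set.Ioc (0:ℝ) 1, (h (p + t • v) - h p) / t ≤ c) : ⟪h', v⟫ ≤ c := by
  have hd := (hasDerivAt_iff_tendsto_slope.mp (myDirDeriv hg v))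
  have hmono : 𝓝[>] (0:ℝ) ≤ 𝓝[≠] (0:ℝ) :=
    nhdsWithin_mono _ (fun t ht => ne_of_gt ht)
  refine le_of_tendsto (hd.mono_left hmono) ?_
  filter_upwards [Ioc_mem_nhdsGT_of_mem (Set.left_mem_Ico.2 one_pos)] with t ht
  have := hc t ht
  simpa [slope_def_field, div_eq_inv_mul] using this

theorem le_inner_of_slope {h : E → ℝ} {h' p : E} (hg : HasGradientAt h h' p) (v : E) {c : ℝ}
    (hc : ∀ t ∈ Set.Ioc (0:ℝ) 1, c ≤ (h (p + t • v) - h p) / t) : c ≤ ⟪h', v⟫ := by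
  have hd := (hasDerivAt_iff_tendsto_slope.mp (myDirDeriv hg v))
  have hmono : 𝓝[>] (0:ℝ) ≤ 𝓝[≠] (0:ℝ) :=
    nhdsWithin_mono _ (fun t ht => ne_of_gt ht)
  refine ge_of_tendsto (hd.mono_left hmono) ?_
  filter_upwards [Ioc_mem_nhdsGT_of_mem (Set.left_mem_Ico.2 one_pos)] with t ht
  have := hc t ht
  simpa [slope_def_field, div_eq_inv_mul] using this

theorem convex_grad_ineq {s : Set E} {h : E → ℝ} (hconv : ConvexOn ℝ s h)
    {x z : E} (hx : x ∈ s) (hz : z ∈ s) {h' : E} (hg : HasGradientAt h h' x) :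
    h x + ⟪h', z - x⟫ ≤ h z := by
  have key : ⟪h', z - x⟫ ≤ h z - h x := by
    refine inner_le_of_slope hg (z - x) (fun t ht => ?_)
    have hmem : x + t • (z - x) = (1 - t) • x + t • z := by
      rw [smul_sub, sub_smul]; module
    have hcv := hconv.2 hx hz (by linarith [ht.2] : (0:ℝ) ≤ 1 - t) (le_of_lt ht.1)
      (by ring : (1 - t) + t = 1)
    rw [hmem]
    rw [div_le_iff₀ ht.1]
    have hcv' : h ((1-t) • x + t • z) ≤ (1-t) * h x + t * h z := by
      simpa [smul_eq_mul] using hcv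
    calc h ((1-t) • x + t • z) - h x ≤ (1-t) * h x + t * h z - h x := by linarith
      _ = (h z - h x) * t := by ring
  linarith

theorem min_grad_ineq {h : E → ℝ} {p v : E} {h' : E} (hg : HasGradientAt h h' p)
    (hmin : ∀ t ∈ Set.Icc (0:ℝ) 1, h p ≤ h (p + t • v)) : 0 ≤ ⟪h', v⟫ := by
  refine le_inner_of_slope hg v (fun t ht => ?_)
  have := hmin t ⟨le_of_lt ht.1, ht.2⟩
  have h0 : (0:ℝ) ≤ h (p + t • v) - h p := by linarith
  exact div_nonneg h0 (le_of_lt ht.1)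

end MyHelpers

noncomputable section GraphHelpers

variable {V m n : ℕ} (head tail : Fin m → Fin V)

/-- The edge difference `(Eᵀ x)_e`. -/
def dE (e : Fin m) (x : NodeVec V n) : EuclideanSpace ℝ (Fin n) :=
  ∑ i, inc head tail i e • x i

theorem dE_sub (e : Fin m) (x y : NodeVec V n) :
    dE head tail e (x - y) = dE head tail e x - dE head tail e y := by
  simp [dE, smul_sub, Finset.sum_sub_distrib]

theorem inner_node_eq (x y : NodeVec V n) : ⟪x, y⟫ = ∑ i, ⟪x i, y i⟫ := PiLp.inner_apply x y

theorem inner_edge_eq (u w : EdgeVec m n) : ⟪u, w⟫ = ∑ e, ⟪u e, w e⟫ := PiLp.inner_apply u w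

theorem inner_Elmap (l : Fin m → ℝ) (u : EdgeVec m n) (x : NodeVec V n) :
    ⟪Elmap head tail l u, x⟫ = ∑ e, Real.sqrt (l e) * ⟪u e, dE head tail e x⟫ := by
  rw [inner_node_eq]
  simp only [Elmap, sum_inner, real_inner_smul_left]
  rw [Finset.sum_comm]
  refine Finset.sum_congr rfl fun e _ => ?_
  simp only [dE, inner_sum, real_inner_smul_right]
  rw [Finset.mul_sum]
  refine Finset.sum_congr rfl fun i _ => ?_
  ring

theorem inner_EltMap (l : Fin m → ℝ) (u : EdgeVec m n) (x : NodeVec V n) :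
    ⟪u, EltMap head tail l x⟫ = ∑ e, Real.sqrt (l e) * ⟪u e, dE head tail e x⟫ := by
  rw [inner_edge_eq]
  refine Finset.sum_congr rfl fun e _ => ?_
  rw [show EltMap head tail l x e = Real.sqrt (l e) • dE head tail e x from rfl,
    real_inner_smul_right]

theorem Elmap_adjoint (l : Fin m → ℝ) (u : EdgeVec m n) (x : NodeVec V n) :
    ⟪Elmap head tail l u, x⟫ = ⟪u, EltMap head tail l x⟫ := by
  rw [inner_Elmap, inner_EltMap]

theorem inner_LrMap (r : Fin m → ℝ) (x y : NodeVec V n) :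
    ⟪LrMap head tail r x, y⟫ = ∑ e, r e * ⟪dE head tail e x, dE head tail e y⟫ := by
  rw [inner_node_eq]
  simp only [LrMap, sum_inner, real_inner_smul_left]
  rw [Finset.sum_comm]
  refine Finset.sum_congr rfl fun e _ => ?_
  simp only [dE, inner_sum, real_inner_smul_right]
  rw [Finset.mul_sum]
  refine Finset.sum_congr rfl fun i _ => ?_
  rw [sum_inner]
  simp only [real_inner_smul_left]
  ring

theorem norm_EltMap_sq (l : Fin m → ℝ) (hl : ∀ e, 0 ≤ l e) (x : NodeVec V n) :
    ‖EltMap head tail l x‖ ^ 2 = ∑ e, l e * ‖dE head tail e x‖ ^ 2 := by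
  rw [← real_inner_self_eq_norm_sq, inner_edge_eq]
  refine Finset.sum_congr rfl fun e _ => ?_
  simp only [EltMap, real_inner_smul_left, real_inner_smul_right, ← real_inner_self_eq_norm_sq]
  rw [← mul_assoc, Real.mul_self_sqrt (hl e)]
  rfl

theorem Lr_inner_self_nonneg (r : Fin m → ℝ) (hr : ∀ e, 0 ≤ r e) (x : NodeVec V n) :
    0 ≤ ⟪LrMap head tail r x, x⟫ := by
  rw [inner_LrMap]
  exact Finset.sum_nonneg fun e _ => mul_nonneg (hr e) (real_inner_self_nonneg)

/-- `L_r` as a linear map. -/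
def LrLin (r : Fin m → ℝ) : NodeVec V n →ₗ[ℝ] NodeVec V n where
  toFun := LrMap head tail r
  map_add' x y := by
    refine PiLp.ext fun i => ?_
    simp [LrMap, PiLp.toLp_apply, PiLp.add_apply, smul_add, Finset.sum_add_distrib]
  map_smul' c x := by
    refine PiLp.ext fun i => ?_
    simp only [LrMap, PiLp.toLp_apply, PiLp.smul_apply, RingHom.id_apply]
    rw [Finset.smul_sum]
    refine Finset.sum_congr rfl fun e _ => ?_
    rw [smul_comm]
    congr 1
    rw [Finset.smul_sum]
    exact Finset.sum_congr rfl fun j _ => smul_comm _ _ _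

theorem Lr_rayleigh_le (r : Fin m → ℝ) (lam : ℝ)
    (hlam : IsGreatest
      {μ : ℝ | ∃ x : NodeVec V n, x ≠ 0 ∧ LrMap head tail r x = μ • x} lam) :
    ∀ v : NodeVec V n, ⟪LrMap head tail r v, v⟫ ≤ lam * ‖v‖ ^ 2 := by
  obtain ⟨⟨x0, hx0, _⟩, hub⟩ := hlam
  haveI : Nontrivial (NodeVec V n) := ⟨⟨x0, 0, hx0⟩⟩
  set T : NodeVec V n →ₗ[ℝ] NodeVec V n := LrLin head tail r with hT
  have hsymm : T.IsSymmetric := by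
    intro x y
    rw [show (inner ℝ x (T y) : ℝ) = inner ℝ (T y) x from real_inner_comm _ _]
    show ⟪LrMap head tail r x, y⟫ = ⟪LrMap head tail r y, x⟫
    rw [inner_LrMap, inner_LrMap]
    exact Finset.sum_congr rfl fun e _ => by rw [real_inner_comm]
  set μ : ℝ := ⨆ x : {x : NodeVec V n // x ≠ 0},
      RCLike.re (⟪T x, (x : NodeVec V n)⟫ : ℝ) / ‖(x : NodeVec V n)‖ ^ 2 with hμ
  have heig := hsymm.hasEigenvalue_iSup_of_finiteDimensional
  obtain ⟨v, hv⟩ := heig.exists_hasEigenvector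
  have hμlam : μ ≤ lam := by
    refine hub ⟨v, hv.right, ?_⟩
    have := hv.apply_eq_smul
    exact this
  haveI : ContinuousSMul ℝ (NodeVec V n) := inferInstance
  set Tc := LinearMap.toContinuousLinearMap T with hTc
  have hbdd : BddAbove (Set.range fun x : {x : NodeVec V n // x ≠ 0} =>
      RCLike.re (⟪T x, (x : NodeVec V n)⟫ : ℝ) / ‖(x : NodeVec V n)‖ ^ 2) := by
    refine ⟨‖Tc‖, ?_⟩
    rintro _ ⟨⟨w, hw⟩, rfl⟩
    simp only [RCLike.re_to_real]
    have h1 : ⟪T w, w⟫ ≤ ‖Tc‖ * ‖w‖ ^ 2 := by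
      calc ⟪T w, w⟫ ≤ ‖T w‖ * ‖w‖ := real_inner_le_norm _ _
        _ ≤ ‖Tc‖ * ‖w‖ * ‖w‖ := by
            have h2 := Tc.le_opNorm w
            have hww : (0:ℝ) ≤ ‖w‖ := norm_nonneg _
            have h3 : ‖T w‖ ≤ ‖Tc‖ * ‖w‖ := h2
            nlinarith [norm_nonneg (T w)]
        _ = ‖Tc‖ * ‖w‖ ^ 2 := by ring
    have hw2 : (0:ℝ) < ‖w‖ ^ 2 := by
      have := norm_pos_iff.mpr hw
      positivity
    rw [div_le_iff₀ hw2]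
    linarith
  intro v0
  rcases eq_or_ne v0 0 with h | h
  · subst h; simp
  · have hle : ⟪T v0, v0⟫ / ‖v0‖ ^ 2 ≤ μ := by
      have := le_ciSup hbdd ⟨v0, h⟩
      exact this
    have hv2 : (0:ℝ) < ‖v0‖ ^ 2 := by
      have := norm_pos_iff.mpr h
      positivity
    have hfin : ⟪T v0, v0⟫ ≤ μ * ‖v0‖ ^ 2 := by
      rw [div_le_iff₀ hv2] at hle; linarith
    calc ⟪LrMap head tail r v0, v0⟫ = ⟪T v0, v0⟫ := rfl
      _ ≤ μ * ‖v0‖ ^ 2 := hfin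
      _ ≤ lam * ‖v0‖ ^ 2 := by nlinarith [hv2]

theorem node_norm_sq (x : NodeVec V n) : ‖x‖ ^ 2 = ∑ i, ‖x i‖ ^ 2 := by
  rw [← real_inner_self_eq_norm_sq, inner_node_eq]
  exact Finset.sum_congr rfl fun i _ => real_inner_self_eq_norm_sq _

theorem convex_prodSet {X₀ : Set (EuclideanSpace ℝ (Fin n))} (hc : Convex ℝ X₀) :
    Convex ℝ {x : NodeVec V n | ∀ i, x i ∈ X₀} := by
  intro a ha b hb s t hs ht hst
  intro i
  have := hc (ha i) (hb i) hs ht hst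
  simpa [PiLp.add_apply, PiLp.smul_apply] using this

theorem convexOn_sum_pi {X₀ : Set (EuclideanSpace ℝ (Fin n))} (hc : Convex ℝ X₀)
    {φ : Fin V → EuclideanSpace ℝ (Fin n) → ℝ} (hφ : ∀ i, ConvexOn ℝ X₀ (φ i)) :
    ConvexOn ℝ {x : NodeVec V n | ∀ i, x i ∈ X₀} (fun x => ∑ i, φ i (x i)) := by
  refine ⟨convex_prodSet hc, fun a ha b hb s t hs ht hst => ?_⟩
  calc (∑ i, φ i ((s • a + t • b) i)) = ∑ i, φ i (s • a i + t • b i) := by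
        refine Finset.sum_congr rfl fun i _ => ?_
        congr 1
    _ ≤ ∑ i, (s * φ i (a i) + t * φ i (b i)) :=
        Finset.sum_le_sum fun i _ => by
          have := (hφ i).2 (ha i) (hb i) hs ht hst
          simpa [smul_eq_mul] using this
    _ = s • (∑ i, φ i (a i)) + t • (∑ i, φ i (b i)) := by
        rw [Finset.sum_add_distrib, ← Finset.mul_sum, ← Finset.mul_sum]
        simp [smul_eq_mul]

end GraphHelpers


set_option maxHeartbeats 4000000 in
/-- Theorem 1 of the paper: with noiseless gradients and constant step size
`0 < α ≤ min{1/(β+λ), 1/γ}`, the averaged RLC iterate satisfies the `O(1/K)`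
duality-gap bound `ℓ(x̄^K, u*) − ℓ(x*, u*) ≤ V(x¹, u¹)/(αK)`. -/
theorem rlc_averaged_convergence (V m n : ℕ) (K : ℕ) (hK : 0 < K)
    (G : SimpleGraph (Fin V)) (hG : G.Connected)
    (head tail : Fin m → Fin V)
    (hadj : ∀ e, G.Adj (head e) (tail e))
    (hcover : ∀ i j, G.Adj i j →
      ∃ e, (head e = i ∧ tail e = j) ∨ (head e = j ∧ tail e = i))
    (l r : Fin m → ℝ) (hl : ∀ e, 0 < l e) (hr : ∀ e, 0 < r e)
    (γ : ℝ) (hγpos : 0 < γ)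
    (hγ : IsGreatest {a : ℝ | ∀ e, a * l e ≤ r e} (1 / γ))
    (lam : ℝ)
    (hlam : IsGreatest
      {μ : ℝ | ∃ x : NodeVec V n, x ≠ 0 ∧ LrMap head tail r x = μ • x} lam)
    -- the constraint set
    (X₀ : Set (EuclideanSpace ℝ (Fin n))) (hX₀c : Convex ℝ X₀)
    (hX₀cl : IsClosed X₀)
    -- the mirror map, a sum of 1-strongly convex node potentials
    (ψ₀ : EuclideanSpace ℝ (Fin n) → ℝ)
    (hψ₀ : ConvexOn ℝ X₀ (fun v => ψ₀ v - ‖v‖ ^ 2 / 2))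
    (ψ' : NodeVec V n → NodeVec V n)
    (hψ' : ∀ z ∈ {x : NodeVec V n | ∀ i, x i ∈ X₀},
      HasGradientAt (fun x : NodeVec V n => ∑ i, ψ₀ (x i)) (ψ' z) z)
    -- the objective, a sum of convex β-smooth node costs
    (β : ℝ) (hβ : 0 < β)
    (F : Fin V → EuclideanSpace ℝ (Fin n) → ℝ)
    (hFconv : ∀ i, ConvexOn ℝ X₀ (F i))
    (hFsmooth : ∀ i, ConvexOn ℝ X₀ (fun v => β / 2 * ‖v‖ ^ 2 - F i v))
    (g : NodeVec V n → NodeVec V n)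
    (hg : ∀ z ∈ {x : NodeVec V n | ∀ i, x i ∈ X₀},
      HasGradientAt (fun x : NodeVec V n => ∑ i, F i (x i)) (g z) z)
    -- the saddle point (x*, u*)
    (xstar : NodeVec V n) (ustar : EdgeVec m n)
    (hxstarX : ∀ i, xstar i ∈ X₀)
    (hprimal : EltMap head tail l xstar = 0)
    (hdual : ∀ z : NodeVec V n, (∀ i, z i ∈ X₀) →
      ⟪-(Elmap head tail l ustar) - g xstar, z - xstar⟫ ≤ 0)
    -- the constant step size
    (α : ℝ) (hα : 0 < α) (hαle : α ≤ min (1 / (β + lam)) (1 / γ))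
    -- the RLC iterates (indexed from k = 1) with noiseless gradients
    (x : ℕ → NodeVec V n) (u : ℕ → EdgeVec m n)
    (hxX : ∀ k, 1 ≤ k → ∀ i, x k i ∈ X₀)
    (hxmin : ∀ k, 1 ≤ k → ∀ z : NodeVec V n, (∀ i, z i ∈ X₀) →
      α * ⟪LrMap head tail r (x k) + Elmap head tail l (u k) + g (x k),
            x (k + 1)⟫
          + bregman (fun y => ∑ i, ψ₀ (y i)) ψ' (x (k + 1)) (x k)
        ≤ α * ⟪LrMap head tail r (x k) + Elmap head tail l (u k) + g (x k), z⟫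
          + bregman (fun y => ∑ i, ψ₀ (y i)) ψ' z (x k))
    (hu : ∀ k, 1 ≤ k → u (k + 1) = u k + α • EltMap head tail l (x (k + 1))) :
    ((∑ i, F i (((K : ℝ)⁻¹ • ∑ k ∈ Finset.Icc 1 K, x (k + 1)) i))
        + ⟪Elmap head tail l ustar, (K : ℝ)⁻¹ • ∑ k ∈ Finset.Icc 1 K, x (k + 1)⟫)
      - ((∑ i, F i (xstar i)) + ⟪Elmap head tail l ustar, xstar⟫)
      ≤ (bregman (fun y => ∑ i, ψ₀ (y i)) ψ' xstar (x 1)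
          + ‖u 1 - ustar‖ ^ 2 / 2) / (α * K) := by
  classical
  have hKpos : (0:ℝ) < (K:ℝ) := by exact_mod_cast hK
  have hXconv : Convex ℝ {x : NodeVec V n | ∀ i, x i ∈ X₀} := convex_prodSet hX₀c
  have hxstarXs : xstar ∈ {x : NodeVec V n | ∀ i, x i ∈ X₀} := hxstarX
  have hxmem : ∀ k, 1 ≤ k → x k ∈ {x : NodeVec V n | ∀ i, x i ∈ X₀} := fun k hk => hxX k hk
  -- edge differences of xstar vanish
  have hdstar : ∀ e, dE head tail e xstar = 0 := by
    intro e
    have h0 : EltMap head tail l xstar e = 0 := by rw [hprimal]; rfl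
    have h1 : Real.sqrt (l e) • dE head tail e xstar = 0 := h0
    have hs : Real.sqrt (l e) ≠ 0 := ne_of_gt (Real.sqrt_pos.mpr (hl e))
    rcases smul_eq_zero.mp h1 with h | h
    · exact absurd h hs
    · exact h
  have hinner_El_star : ∀ u' : EdgeVec m n, ⟪Elmap head tail l u', xstar⟫ = 0 := by
    intro u'; rw [inner_Elmap]
    refine Finset.sum_eq_zero fun e _ => ?_
    rw [hdstar e, inner_zero_right, mul_zero]
  have hinner_Lr_star : ∀ p : NodeVec V n, ⟪LrMap head tail r p, xstar⟫ = 0 := by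
    intro p; rw [inner_LrMap]
    refine Finset.sum_eq_zero fun e _ => ?_
    rw [hdstar e, inner_zero_right, mul_zero]
  -- convexity facts
  have hfconv : ConvexOn ℝ {x : NodeVec V n | ∀ i, x i ∈ X₀}
      (fun y : NodeVec V n => ∑ i, F i (y i)) := convexOn_sum_pi hX₀c hFconv
  have hsmconv : ConvexOn ℝ {x : NodeVec V n | ∀ i, x i ∈ X₀}
      (fun y : NodeVec V n => β * (‖y‖ ^ 2 / 2) - ∑ i, F i (y i)) := by
    have h := convexOn_sum_pi hX₀c hFsmooth
    have heq : (fun y : NodeVec V n => β * (‖y‖ ^ 2 / 2) - ∑ i, F i (y i))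
        = fun y : NodeVec V n => ∑ i, (β / 2 * ‖y i‖ ^ 2 - F i (y i)) := by
      funext y
      rw [Finset.sum_sub_distrib]
      congr 1
      rw [node_norm_sq, Finset.sum_div, Finset.mul_sum]
      exact Finset.sum_congr rfl fun i _ => by ring
    rw [heq]; exact h
  have hψconv : ConvexOn ℝ {x : NodeVec V n | ∀ i, x i ∈ X₀}
      (fun y : NodeVec V n => (∑ i, ψ₀ (y i)) - ‖y‖ ^ 2 / 2) := by
    have h := convexOn_sum_pi hX₀c (fun _ : Fin V => hψ₀)
    have heq : (fun y : NodeVec V n => (∑ i, ψ₀ (y i)) - ‖y‖ ^ 2 / 2)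
        = fun y : NodeVec V n => ∑ i, (ψ₀ (y i) - ‖y i‖ ^ 2 / 2) := by
      funext y
      rw [Finset.sum_sub_distrib]
      congr 1
      rw [node_norm_sq, Finset.sum_div]
    rw [heq]; exact h
  -- strong convexity of the Bregman divergence
  have hbreg : ∀ x' xh : NodeVec V n, x' ∈ {x : NodeVec V n | ∀ i, x i ∈ X₀} →
      xh ∈ {x : NodeVec V n | ∀ i, x i ∈ X₀} →
      ‖x' - xh‖ ^ 2 / 2 ≤ bregman (fun y => ∑ i, ψ₀ (y i)) ψ' x' xh := by
    intro x' xh hx' hxh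
    have hgrad : HasGradientAt (fun y : NodeVec V n => (∑ i, ψ₀ (y i)) - ‖y‖ ^ 2 / 2)
        (ψ' xh - xh) xh := myHasGradientAt_sub (hψ' xh hxh) (myHasGradientAt_half_sq xh)
    have hcg := convex_grad_ineq hψconv hxh hx' hgrad
    have hx1 : ⟪ψ' xh - xh, x' - xh⟫ = ⟪ψ' xh, x' - xh⟫ - ⟪xh, x' - xh⟫ :=
      inner_sub_left _ _ _
    have hx1b : ⟪xh, x' - xh⟫ = ⟪xh, x'⟫ - ‖xh‖ ^ 2 := by
      rw [inner_sub_right, real_inner_self_eq_norm_sq]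
    have hx2 : ‖x' - xh‖ ^ 2 = ‖x'‖ ^ 2 - 2 * ⟪xh, x'⟫ + ‖xh‖ ^ 2 := by
      rw [norm_sub_sq_real, real_inner_comm]
      try ring
    simp only [bregman]
    linarith
  -- smoothness inequality
  have hfgrad_ineq : ∀ p ∈ {x : NodeVec V n | ∀ i, x i ∈ X₀},
      ∀ q ∈ {x : NodeVec V n | ∀ i, x i ∈ X₀},
      (∑ i, F i (q i)) ≤ (∑ i, F i (p i)) + ⟪g p, q - p⟫ + β / 2 * ‖q - p‖ ^ 2 := by
    intro p hp q hq
    have hgrad : HasGradientAt (fun y : NodeVec V n => β * (‖y‖ ^ 2 / 2) - ∑ i, F i (y i))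
        (β • p - g p) p :=
      myHasGradientAt_sub (myHasGradientAt_smul β (myHasGradientAt_half_sq p)) (hg p hp)
    have hcg := convex_grad_ineq hsmconv hp hq hgrad
    have h1 : ⟪β • p - g p, q - p⟫ = β * (⟪p, q⟫ - ‖p‖ ^ 2) - ⟪g p, q - p⟫ := by
      simp only [inner_sub_left, inner_sub_right, real_inner_smul_left,
        real_inner_self_eq_norm_sq]
      try ring
    have h2 : ‖q - p‖ ^ 2 = ‖q‖ ^ 2 - 2 * ⟪p, q⟫ + ‖p‖ ^ 2 := by
      rw [norm_sub_sq_real, real_inner_comm]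
      try ring
    rw [h2]
    linarith
  -- convexity inequality
  have hfconv_ineq : ∀ p ∈ {x : NodeVec V n | ∀ i, x i ∈ X₀},
      (∑ i, F i (p i)) + ⟪g p, xstar - p⟫ ≤ ∑ i, F i (xstar i) := by
    intro p hp
    exact convex_grad_ineq hfconv hp hxstarXs (hg p hp)
  -- spectral bound
  have hray := Lr_rayleigh_le head tail r lam hlam
  have hlam0 : 0 ≤ lam := by
    obtain ⟨x0, hx0ne, hx0eq⟩ := hlam.1
    have h1 : ⟪LrMap head tail r x0, x0⟫ = lam * ‖x0‖ ^ 2 := by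
      rw [hx0eq, real_inner_smul_left, real_inner_self_eq_norm_sq]
    have h2 := Lr_inner_self_nonneg head tail r (fun e => (hr e).le) x0
    have h3 : (0:ℝ) < ‖x0‖ ^ 2 := by
      have := norm_pos_iff.mpr hx0ne
      positivity
    nlinarith
  have habl : α * (β + lam) ≤ 1 := by
    have h1 : α ≤ 1 / (β + lam) := le_trans hαle (min_le_left _ _)
    have h2 : 0 < β + lam := by linarith
    rw [le_div_iff₀ h2] at h1; linarith
  have hαγ : α * γ ≤ 1 := by
    have h1 : α ≤ 1 / γ := le_trans hαle (min_le_right _ _)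
    rw [le_div_iff₀ hγpos] at h1; linarith
  have hlγr : ∀ e, l e ≤ γ * r e := by
    intro e
    have h1 := mul_le_mul_of_nonneg_left (hγ.1 e) hγpos.le
    rw [← mul_assoc, mul_one_div_cancel (ne_of_gt hγpos), one_mul] at h1
    exact h1
  -- the per-step inequality
  have hstep : ∀ k, 1 ≤ k →
      α * (((∑ i, F i (x (k+1) i)) + ⟪Elmap head tail l ustar, x (k+1)⟫)
        - ((∑ i, F i (xstar i)) + ⟪Elmap head tail l ustar, xstar⟫))
      ≤ (bregman (fun y => ∑ i, ψ₀ (y i)) ψ' xstar (x k) + ‖u k - ustar‖ ^ 2 / 2)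
        - (bregman (fun y => ∑ i, ψ₀ (y i)) ψ' xstar (x (k+1))
            + ‖u (k+1) - ustar‖ ^ 2 / 2) := by
    intro k hk
    have hpX : x k ∈ {x : NodeVec V n | ∀ i, x i ∈ X₀} := hxmem k hk
    have hqX : x (k+1) ∈ {x : NodeVec V n | ∀ i, x i ∈ X₀} := hxmem (k+1) (by omega)
    -- variational inequality from the mirror step
    have hVI : α * (⟪LrMap head tail r (x k), x (k+1)⟫
          + ⟪Elmap head tail l (u k), x (k+1)⟫ + ⟪g (x k), x (k+1) - xstar⟫)
        ≤ bregman (fun y => ∑ i, ψ₀ (y i)) ψ' xstar (x k)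
          - bregman (fun y => ∑ i, ψ₀ (y i)) ψ' xstar (x (k+1))
          - bregman (fun y => ∑ i, ψ₀ (y i)) ψ' (x (k+1)) (x k) := by
      set w : NodeVec V n := LrMap head tail r (x k) + Elmap head tail l (u k) + g (x k)
        with hw
      set nf : NodeVec V n → ℝ := fun y => α * ⟪w, y⟫
          + ((∑ i, ψ₀ (y i)) - ((∑ i, ψ₀ (x k i)) + (⟪ψ' (x k), y⟫ - ⟪ψ' (x k), x k⟫)))
        with hnf
      have hnfeq : ∀ y, nf y = α * ⟪w, y⟫
          + bregman (fun y => ∑ i, ψ₀ (y i)) ψ' y (x k) := by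
        intro y
        simp only [hnf, bregman, inner_sub_right]
        ring
      have hgradnf : HasGradientAt nf (α • w + (ψ' (x (k+1)) - ψ' (x k))) (x (k+1)) := by
        rw [hnf]
        apply myHasGradientAt_add
        · exact myHasGradientAt_smul α (myHasGradientAt_inner w (x (k+1)))
        · have h2 : HasGradientAt
              (fun y : NodeVec V n => ⟪ψ' (x k), y⟫ - ⟪ψ' (x k), x k⟫)
              (ψ' (x k) - 0) (x (k+1)) :=
            myHasGradientAt_sub (myHasGradientAt_inner (ψ' (x k)) (x (k+1)))
              (hasGradientAt_const _ _)
          have h3 := myHasGradientAt_add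
            (hasGradientAt_const (x (k+1)) ((∑ i, ψ₀ (x k i)))) h2
          have h4 := myHasGradientAt_sub (hψ' (x (k+1)) hqX) h3
          simpa using h4
      have hseg : ∀ t ∈ Set.Icc (0:ℝ) 1,
          nf (x (k+1)) ≤ nf (x (k+1) + t • (xstar - x (k+1))) := by
        intro t ht
        have hmem : x (k+1) + t • (xstar - x (k+1)) ∈ {x : NodeVec V n | ∀ i, x i ∈ X₀} := by
          have heq2 : x (k+1) + t • (xstar - x (k+1)) = (1 - t) • x (k+1) + t • xstar := by
            rw [smul_sub, sub_smul]; module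
          rw [heq2]
          exact hXconv hqX hxstarXs (by linarith [ht.2]) ht.1 (by ring)
        have hmin := hxmin k hk (x (k+1) + t • (xstar - x (k+1))) hmem
        rw [hnfeq, hnfeq]
        exact hmin
      have h0 := min_grad_ineq hgradnf hseg
      have hexp : ⟪α • w + (ψ' (x (k+1)) - ψ' (x k)), xstar - x (k+1)⟫
          = α * ⟪w, xstar - x (k+1)⟫ + ⟪ψ' (x (k+1)) - ψ' (x k), xstar - x (k+1)⟫ := by
        rw [inner_add_left, real_inner_smul_left]
      have h3pt : ⟪ψ' (x (k+1)) - ψ' (x k), xstar - x (k+1)⟫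
          = bregman (fun y => ∑ i, ψ₀ (y i)) ψ' xstar (x k)
            - bregman (fun y => ∑ i, ψ₀ (y i)) ψ' xstar (x (k+1))
            - bregman (fun y => ∑ i, ψ₀ (y i)) ψ' (x (k+1)) (x k) := by
        simp only [bregman, inner_sub_left, inner_sub_right]
        ring
      have hwexp : ⟪w, xstar - x (k+1)⟫
          = -(⟪LrMap head tail r (x k), x (k+1)⟫ + ⟪Elmap head tail l (u k), x (k+1)⟫
              + ⟪g (x k), x (k+1) - xstar⟫) := by
        rw [hw]
        simp only [inner_add_left, inner_sub_right]
        rw [hinner_Lr_star (x k), hinner_El_star (u k)]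
        ring
      rw [hexp, h3pt, hwexp] at h0
      linarith
    -- dual update expansion
    have hdual_eq : ‖u (k+1) - ustar‖ ^ 2 / 2
        = ‖u k - ustar‖ ^ 2 / 2 + α * ⟪u k - ustar, EltMap head tail l (x (k+1))⟫
          + α ^ 2 * ‖EltMap head tail l (x (k+1))‖ ^ 2 / 2 := by
      have h1 : u (k+1) - ustar = (u k - ustar) + α • EltMap head tail l (x (k+1)) := by
        rw [hu k hk]; abel
      rw [h1, norm_add_sq_real, real_inner_smul_right, norm_smul, Real.norm_eq_abs,
        mul_pow, sq_abs]
      ring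
    -- energy bound on the dual direction
    have hS : ‖EltMap head tail l (x (k+1))‖ ^ 2
        ≤ γ * ⟪LrMap head tail r (x (k+1)), x (k+1)⟫ := by
      rw [norm_EltMap_sq head tail l (fun e => (hl e).le), inner_LrMap, Finset.mul_sum]
      refine Finset.sum_le_sum fun e _ => ?_
      rw [real_inner_self_eq_norm_sq]
      calc l e * ‖dE head tail e (x (k+1))‖ ^ 2
          ≤ (γ * r e) * ‖dE head tail e (x (k+1))‖ ^ 2 :=
            mul_le_mul_of_nonneg_right (hlγr e) (by positivity)
        _ = γ * (r e * ‖dE head tail e (x (k+1))‖ ^ 2) := by ring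
    have hQnn : 0 ≤ ⟪LrMap head tail r (x (k+1)), x (k+1)⟫ :=
      Lr_inner_self_nonneg head tail r (fun e => (hr e).le) (x (k+1))
    have hA5 : α * α * ‖EltMap head tail l (x (k+1))‖ ^ 2
        ≤ α * ⟪LrMap head tail r (x (k+1)), x (k+1)⟫ := by
      have t1 := mul_le_mul_of_nonneg_left hS (mul_nonneg hα.le hα.le)
      have t2 := mul_le_mul_of_nonneg_right hαγ (mul_nonneg hα.le hQnn)
      nlinarith
    -- quadratic comparison
    have hc7 : ⟪LrMap head tail r (x (k+1)), x (k+1)⟫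
        - 2 * ⟪LrMap head tail r (x k), x (k+1)⟫ ≤ lam * ‖x (k+1) - x k‖ ^ 2 := by
      have hsub : ⟪LrMap head tail r (x (k+1) - x k), x (k+1) - x k⟫
          ≤ lam * ‖x (k+1) - x k‖ ^ 2 := hray (x (k+1) - x k)
      have hmid : ⟪LrMap head tail r (x (k+1)), x (k+1)⟫
          - 2 * ⟪LrMap head tail r (x k), x (k+1)⟫
          ≤ ⟪LrMap head tail r (x (k+1) - x k), x (k+1) - x k⟫ := by
        rw [inner_LrMap, inner_LrMap, inner_LrMap, Finset.mul_sum, ← Finset.sum_sub_distrib]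
        refine Finset.sum_le_sum fun e _ => ?_
        rw [dE_sub]
        have hz := real_inner_self_nonneg (x := dE head tail e (x k))
        have hexp : (⟪dE head tail e (x (k+1)) - dE head tail e (x k),
            dE head tail e (x (k+1)) - dE head tail e (x k)⟫ : ℝ)
            = ⟪dE head tail e (x (k+1)), dE head tail e (x (k+1))⟫
              - 2 * ⟪dE head tail e (x k), dE head tail e (x (k+1))⟫
              + ⟪dE head tail e (x k), dE head tail e (x k)⟫ := by
          simp only [inner_sub_left, inner_sub_right]
          rw [real_inner_comm (dE head tail e (x (k+1))) (dE head tail e (x k))]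
          ring
        rw [hexp]
        nlinarith [mul_nonneg (hr e).le hz]
      linarith
    have hA6 := mul_le_mul_of_nonneg_left hc7 hα.le
    have hA7 : ‖x (k+1) - x k‖ ^ 2 / 2
        ≤ bregman (fun y => ∑ i, ψ₀ (y i)) ψ' (x (k+1)) (x k) :=
      hbreg (x (k+1)) (x k) hqX hpX
    have hA8 : α * (β + lam) * ‖x (k+1) - x k‖ ^ 2 ≤ ‖x (k+1) - x k‖ ^ 2 := by
      have := mul_le_mul_of_nonneg_right habl (sq_nonneg ‖x (k+1) - x k‖)
      linarith
    -- smooth + convex combined, multiplied by α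
    have hA1 : α * ((∑ i, F i (x (k+1) i)) - (∑ i, F i (xstar i)))
        ≤ α * (⟪g (x k), x (k+1) - xstar⟫ + β / 2 * ‖x (k+1) - x k‖ ^ 2) := by
      have h1 := hfgrad_ineq (x k) hpX (x (k+1)) hqX
      have h2 := hfconv_ineq (x k) hpX
      have h3 : ⟪g (x k), x (k+1) - x k⟫ - ⟪g (x k), xstar - x k⟫
          = ⟪g (x k), x (k+1) - xstar⟫ := by
        simp only [inner_sub_right]
        ring
      have h4 : (∑ i, F i (x (k+1) i)) - (∑ i, F i (xstar i))
          ≤ ⟪g (x k), x (k+1) - xstar⟫ + β / 2 * ‖x (k+1) - x k‖ ^ 2 := by linarith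
      exact mul_le_mul_of_nonneg_left h4 hα.le
    -- adjoints
    have hadj1 : ⟪Elmap head tail l (u k), x (k+1)⟫
        = ⟪u k, EltMap head tail l (x (k+1))⟫ := Elmap_adjoint head tail l _ _
    have hadj2 : ⟪Elmap head tail l ustar, x (k+1)⟫
        = ⟪ustar, EltMap head tail l (x (k+1))⟫ := Elmap_adjoint head tail l _ _
    have hD : ⟪u k - ustar, EltMap head tail l (x (k+1))⟫
        = ⟪u k, EltMap head tail l (x (k+1))⟫ - ⟪ustar, EltMap head tail l (x (k+1))⟫ :=
      inner_sub_left _ _ _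
    have hstar0 : ⟪Elmap head tail l ustar, xstar⟫ = 0 := hinner_El_star ustar
    rw [hadj1] at hVI
    rw [hD] at hdual_eq
    rw [hadj2, hstar0]
    linarith
  -- telescoping
  have htel : ∀ N : ℕ, (∑ k ∈ Finset.Icc 1 N,
      ((bregman (fun y => ∑ i, ψ₀ (y i)) ψ' xstar (x k) + ‖u k - ustar‖ ^ 2 / 2)
        - (bregman (fun y => ∑ i, ψ₀ (y i)) ψ' xstar (x (k+1))
            + ‖u (k+1) - ustar‖ ^ 2 / 2)))
      = (bregman (fun y => ∑ i, ψ₀ (y i)) ψ' xstar (x 1) + ‖u 1 - ustar‖ ^ 2 / 2)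
        - (bregman (fun y => ∑ i, ψ₀ (y i)) ψ' xstar (x (N+1))
            + ‖u (N+1) - ustar‖ ^ 2 / 2) := by
    intro N
    induction N with
    | zero => rw [Finset.Icc_eq_empty (by omega)]; simp
    | succ N ih =>
        rw [Finset.sum_Icc_succ_top (by omega : 1 ≤ N + 1), ih]
        ring
  have hV_nonneg : 0 ≤ bregman (fun y => ∑ i, ψ₀ (y i)) ψ' xstar (x (K+1))
      + ‖u (K+1) - ustar‖ ^ 2 / 2 := by
    have h1 := hbreg xstar (x (K+1)) hxstarXs (hxmem (K+1) (by omega))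
    have h2 : (0:ℝ) ≤ ‖xstar - x (K+1)‖ ^ 2 / 2 := by positivity
    have h3 : (0:ℝ) ≤ ‖u (K+1) - ustar‖ ^ 2 / 2 := by positivity
    linarith
  -- summing the per-step inequalities
  have hsum : α * ∑ k ∈ Finset.Icc 1 K,
      (((∑ i, F i (x (k+1) i)) + ⟪Elmap head tail l ustar, x (k+1)⟫)
        - ((∑ i, F i (xstar i)) + ⟪Elmap head tail l ustar, xstar⟫))
      ≤ bregman (fun y => ∑ i, ψ₀ (y i)) ψ' xstar (x 1) + ‖u 1 - ustar‖ ^ 2 / 2 := by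
    rw [Finset.mul_sum]
    have h1 : (∑ k ∈ Finset.Icc 1 K, α *
        (((∑ i, F i (x (k+1) i)) + ⟪Elmap head tail l ustar, x (k+1)⟫)
          - ((∑ i, F i (xstar i)) + ⟪Elmap head tail l ustar, xstar⟫)))
        ≤ ∑ k ∈ Finset.Icc 1 K,
          ((bregman (fun y => ∑ i, ψ₀ (y i)) ψ' xstar (x k) + ‖u k - ustar‖ ^ 2 / 2)
            - (bregman (fun y => ∑ i, ψ₀ (y i)) ψ' xstar (x (k+1))
                + ‖u (k+1) - ustar‖ ^ 2 / 2)) :=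
      Finset.sum_le_sum fun k hk => hstep k (Finset.mem_Icc.mp hk).1
    rw [htel K] at h1
    linarith
  -- Jensen step on the averaged iterate
  set xbar : NodeVec V n := (K : ℝ)⁻¹ • ∑ k ∈ Finset.Icc 1 K, x (k + 1) with hxbar
  have hbar_node : ∀ i, xbar i = ∑ k ∈ Finset.Icc 1 K, (K:ℝ)⁻¹ • x (k+1) i := by
    intro i
    rw [hxbar]
    rw [PiLp.smul_apply, ← Finset.smul_sum]
    congr 1
    rw [WithLp.ofLp_sum]
    exact Finset.sum_apply i (Finset.Icc 1 K) fun k => x (k+1)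
  have hJensen : ∀ i, F i (xbar i) ≤ ∑ k ∈ Finset.Icc 1 K, (K:ℝ)⁻¹ * F i (x (k+1) i) := by
    intro i
    have hw0 : ∀ k ∈ Finset.Icc 1 K, (0:ℝ) ≤ (K:ℝ)⁻¹ := fun _ _ => by positivity
    have hw1 : (∑ _k ∈ Finset.Icc 1 K, (K:ℝ)⁻¹) = 1 := by
      rw [Finset.sum_const, Nat.card_Icc, nsmul_eq_mul]
      simp only [Nat.add_sub_cancel]
      field_simp
    have hmem : ∀ k ∈ Finset.Icc 1 K, x (k+1) i ∈ X₀ := fun k hk =>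
      hxX (k+1) (by omega) i
    have h := (hFconv i).map_sum_le hw0 hw1 hmem
    rw [hbar_node i]
    exact h
  have hf_bar : (∑ i, F i (xbar i))
      ≤ (K:ℝ)⁻¹ * ∑ k ∈ Finset.Icc 1 K, ∑ i, F i (x (k+1) i) := by
    calc (∑ i, F i (xbar i))
        ≤ ∑ i, ∑ k ∈ Finset.Icc 1 K, (K:ℝ)⁻¹ * F i (x (k+1) i) :=
          Finset.sum_le_sum fun i _ => hJensen i
      _ = (K:ℝ)⁻¹ * ∑ k ∈ Finset.Icc 1 K, ∑ i, F i (x (k+1) i) := by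
          rw [Finset.sum_comm, Finset.mul_sum]
          exact Finset.sum_congr rfl fun k _ => by rw [Finset.mul_sum]
  have hlin_bar : ⟪Elmap head tail l ustar, xbar⟫
      = (K:ℝ)⁻¹ * ∑ k ∈ Finset.Icc 1 K, ⟪Elmap head tail l ustar, x (k+1)⟫ := by
    rw [hxbar, real_inner_smul_right, inner_sum]
  -- final assembly
  have hsplit : (∑ k ∈ Finset.Icc 1 K,
      (((∑ i, F i (x (k+1) i)) + ⟪Elmap head tail l ustar, x (k+1)⟫)
        - ((∑ i, F i (xstar i)) + ⟪Elmap head tail l ustar, xstar⟫)))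
      = (∑ k ∈ Finset.Icc 1 K,
          ((∑ i, F i (x (k+1) i)) + ⟪Elmap head tail l ustar, x (k+1)⟫))
        - (K:ℝ) * ((∑ i, F i (xstar i)) + ⟪Elmap head tail l ustar, xstar⟫) := by
    rw [Finset.sum_sub_distrib, Finset.sum_const, Nat.card_Icc, nsmul_eq_mul]
    simp only [Nat.add_sub_cancel]
  have hsum_split : (∑ k ∈ Finset.Icc 1 K,
      ((∑ i, F i (x (k+1) i)) + ⟪Elmap head tail l ustar, x (k+1)⟫))
      = (∑ k ∈ Finset.Icc 1 K, ∑ i, F i (x (k+1) i))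
        + ∑ k ∈ Finset.Icc 1 K, ⟪Elmap head tail l ustar, x (k+1)⟫ :=
    Finset.sum_add_distrib
  set SA : ℝ := (∑ k ∈ Finset.Icc 1 K,
      ((∑ i, F i (x (k+1) i)) + ⟪Elmap head tail l ustar, x (k+1)⟫)) with hSA
  set C : ℝ := (∑ i, F i (xstar i)) + ⟪Elmap head tail l ustar, xstar⟫ with hC
  set V1 : ℝ := bregman (fun y => ∑ i, ψ₀ (y i)) ψ' xstar (x 1)
      + ‖u 1 - ustar‖ ^ 2 / 2 with hV1
  have h9 : SA - (K:ℝ) * C ≤ V1 / α := by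
    rw [le_div_iff₀ hα]
    rw [hsplit] at hsum
    nlinarith [hsum]
  have h10 : (K:ℝ)⁻¹ * (SA - (K:ℝ) * C) ≤ (K:ℝ)⁻¹ * (V1 / α) :=
    mul_le_mul_of_nonneg_left h9 (by positivity)
  have h11 : (K:ℝ)⁻¹ * (SA - (K:ℝ) * C) = (K:ℝ)⁻¹ * SA - C := by
    field_simp
  have h12 : (K:ℝ)⁻¹ * (V1 / α) = V1 / (α * (K:ℝ)) := by
    rw [inv_mul_eq_div, div_div]
  have hfinal : ((∑ i, F i (xbar i)) + ⟪Elmap head tail l ustar, xbar⟫) - C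
      ≤ V1 / (α * (K:ℝ)) := by
    have hle : ((∑ i, F i (xbar i)) + ⟪Elmap head tail l ustar, xbar⟫)
        ≤ (K:ℝ)⁻¹ * SA := by
      rw [hsum_split, mul_add]
      have := hf_bar
      rw [hlin_bar]
      linarith
    calc ((∑ i, F i (xbar i)) + ⟪Elmap head tail l ustar, xbar⟫) - C
        ≤ (K:ℝ)⁻¹ * SA - C := by linarith
      _ = (K:ℝ)⁻¹ * (SA - (K:ℝ) * C) := by rw [h11]
      _ ≤ (K:ℝ)⁻¹ * (V1 / α) := h10
      _ = V1 / (α * (K:ℝ)) := h12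
  exact hfinal
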